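/- Let x ∈ ℝ^n be fixed, let (w_{ij})_{1≤i≤N, 1≤j≤n} be i.i.d. N(0, σ_w²) and b_1, …, b_N i.i.d. N(0, σ_b²), all jointly independent. Then E[∑_{i=1}^N max(∑_{j=1}^n w_{ij} x_j + b_i, 0)²] = (σ_w² ‖x‖² + σ_b²) · N/2. That is, the expected squared norm of the output of one ReLU layer, conditional on the squared norm y = ‖x‖² of the previous layer, equals (σ_w² y + σ_b²) N/2. -/

import Mathlib

open MeasureTheory ProbabilityTheory
open scoped NNReal

open scoped ENNReal
open Real Set


lemma integrable_sq_mul_exp_neg_mul_sq {c : ℝ} (hc : 0 < c) :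
    Integrable (fun y : ℝ => y ^ 2 * Real.exp (-c * y ^ 2)) := by
  have h := integrable_rpow_mul_exp_neg_mul_sq hc (s := 2) (by norm_num)
  have : (fun y : ℝ => y ^ (2 : ℝ) * Real.exp (-c * y ^ 2))
      = fun y : ℝ => y ^ 2 * Real.exp (-c * y ^ 2) := by
    funext y
    rw [show (2:ℝ) = ((2:ℕ):ℝ) by norm_num, Real.rpow_natCast]
  rwa [this] at h

lemma integral_sq_mul_exp_neg_mul_sq {c : ℝ} (hc : 0 < c) :
    ∫ y : ℝ, y ^ 2 * Real.exp (-c * y ^ 2) = c ^ (-(3:ℝ)/2) * (Real.sqrt π / 2) := by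
  have habs : ∫ y : ℝ, y ^ 2 * Real.exp (-c * y ^ 2)
      = 2 * ∫ y in Ioi (0:ℝ), y ^ 2 * Real.exp (-c * y ^ 2) := by
    rw [← integral_comp_abs (f := fun y : ℝ => y ^ 2 * Real.exp (-c * y ^ 2))]
    congr 1
    funext y
    rw [sq_abs]
  have hIoi : ∫ y in Ioi (0:ℝ), y ^ 2 * Real.exp (-c * y ^ 2)
      = c ^ (-(3:ℝ)/2) * (1/2) * Real.Gamma ((3:ℝ)/2) := by
    have h := integral_rpow_mul_exp_neg_mul_rpow (p := 2) (q := 2) (by norm_num) (by norm_num) hc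
    have e : ∀ y ∈ Ioi (0:ℝ), y ^ (2:ℝ) * Real.exp (-c * y ^ (2:ℝ))
        = y ^ 2 * Real.exp (-c * y ^ 2) := by
      intro y _
      rw [show (2:ℝ) = ((2:ℕ):ℝ) by norm_num, Real.rpow_natCast]
    rw [setIntegral_congr_fun measurableSet_Ioi e] at h
    rw [h]
    norm_num
  have hGamma : Real.Gamma ((3:ℝ)/2) = Real.sqrt π / 2 := by
    have : ((3:ℝ)/2) = 1/2 + 1 := by norm_num
    rw [this, Real.Gamma_add_one (by norm_num), Real.Gamma_one_half_eq]
    ring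
  rw [habs, hIoi, hGamma]
  ring

lemma integrable_sq_gaussianReal (v : ℝ≥0) :
    Integrable (fun y : ℝ => y ^ 2) (gaussianReal 0 v) := by
  by_cases hv : v = 0
  · subst hv
    simp only [gaussianReal_zero_var]
    refine (integrable_const ((0:ℝ) ^ 2)).congr ?_
    rw [ae_dirac_eq]
    exact Filter.eventually_pure.mpr rfl
  · rw [gaussianReal_of_var_ne_zero 0 hv]
    rw [integrable_withDensity_iff (measurable_gaussianPDF 0 v)
      (Filter.Eventually.of_forall fun x => ENNReal.ofReal_lt_top)]
    have hvpos : (0:ℝ) < v := by exact_mod_cast (pos_iff_ne_zero.mpr hv)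
    have hc : (0:ℝ) < ((2:ℝ) * (v:ℝ))⁻¹ := by positivity
    have : (fun y : ℝ => y ^ 2 * (ProbabilityTheory.gaussianPDF 0 v y).toReal)
        = fun y : ℝ => (Real.sqrt (2 * π * v))⁻¹ * (y ^ 2 * Real.exp (-(2 * (v:ℝ))⁻¹ * y ^ 2)) := by
      funext y
      rw [gaussianPDF, ENNReal.toReal_ofReal (gaussianPDFReal_nonneg _ _ _), gaussianPDFReal]
      rw [show (- (y - 0)^2 / (2 * (v:ℝ))) = -(2 * (v:ℝ))⁻¹ * y ^ 2 by field_simp; ring]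
      ring
    rw [this]
    exact (integrable_sq_mul_exp_neg_mul_sq hc).const_mul _

lemma integral_sq_gaussianReal (v : ℝ≥0) :
    ∫ y : ℝ, y ^ 2 ∂(gaussianReal 0 v) = v := by
  by_cases hv : v = 0
  · simp [hv, gaussianReal_zero_var]
  · have hvpos : (0:ℝ) < v := by exact_mod_cast (pos_iff_ne_zero.mpr hv)
    have hc : (0:ℝ) < ((2:ℝ) * (v:ℝ))⁻¹ := by positivity
    rw [gaussianReal_of_var_ne_zero 0 hv]
    have hpdf : ProbabilityTheory.gaussianPDF 0 v
        = fun y => ((Real.toNNReal (gaussianPDFReal 0 v y) : ℝ≥0) : ℝ≥0∞) := by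
      funext y; rw [gaussianPDF, ENNReal.ofReal]
    rw [hpdf, integral_withDensity_eq_integral_smul
      ((measurable_gaussianPDFReal 0 v).real_toNNReal) (fun y : ℝ => y ^ 2)]
    have : (fun y : ℝ => Real.toNNReal (gaussianPDFReal 0 v y) • y ^ 2)
        = fun y : ℝ => (Real.sqrt (2 * π * v))⁻¹ * (y ^ 2 * Real.exp (-(2 * (v:ℝ))⁻¹ * y ^ 2)) := by
      funext y
      rw [NNReal.smul_def, smul_eq_mul, Real.coe_toNNReal _ (gaussianPDFReal_nonneg _ _ _),
        gaussianPDFReal]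
      rw [show (- (y - 0)^2 / (2 * (v:ℝ))) = -(2 * (v:ℝ))⁻¹ * y ^ 2 by field_simp; ring]
      ring
    rw [this, integral_const_mul, integral_sq_mul_exp_neg_mul_sq hc]
    -- arithmetic
    have h2v : (0:ℝ) < 2 * (v:ℝ) := by positivity
    have hπ : (0:ℝ) < π := Real.pi_pos
    have e1 : ((2:ℝ) * (v:ℝ))⁻¹ ^ (-(3:ℝ)/2) = (2 * (v:ℝ)) ^ ((3:ℝ)/2) := by
      rw [Real.inv_rpow h2v.le, ← Real.rpow_neg h2v.le]
      norm_num
    have e2 : Real.sqrt (2 * π * (v:ℝ)) = (2 * (v:ℝ)) ^ ((1:ℝ)/2) * π ^ ((1:ℝ)/2) := by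
      rw [Real.sqrt_eq_rpow, show (2:ℝ) * π * (v:ℝ) = (2 * (v:ℝ)) * π by ring,
        Real.mul_rpow h2v.le hπ.le]
    have e3 : Real.sqrt π = π ^ ((1:ℝ)/2) := Real.sqrt_eq_rpow π
    rw [e1, e2, e3, mul_inv, mul_comm ((2 * (v:ℝ)) ^ ((1:ℝ)/2))⁻¹]
    have hπne : π ^ ((1:ℝ)/2) ≠ 0 := by positivity
    have e4 : (2 * (v:ℝ)) ^ ((3:ℝ)/2) = (2 * (v:ℝ)) ^ ((1:ℝ)/2) * (2 * (v:ℝ)) := by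
      rw [show (3:ℝ)/2 = (1:ℝ)/2 + 1 by norm_num, Real.rpow_add h2v, Real.rpow_one]
    have h12ne : (2 * (v:ℝ)) ^ ((1:ℝ)/2) ≠ 0 := by positivity
    rw [e4]
    field_simp

section Prob
set_option linter.unusedSectionVars false

variable {Ω : Type*} [MeasureSpace Ω] [IsProbabilityMeasure (ℙ : Measure Ω)]

lemma map_mul_const_gaussian {X : Ω → ℝ} {v : ℝ≥0} (hX : Measurable X)
    (hlaw : Measure.map X ℙ = gaussianReal 0 v) (c : ℝ) :
    Measure.map (fun ω => X ω * c) ℙ = gaussianReal 0 (⟨c ^ 2, sq_nonneg _⟩ * v) := by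
  have h : (fun ω => X ω * c) = (· * c) ∘ X := rfl
  rw [h, ← Measure.map_map (measurable_mul_const c) hX, hlaw,
    gaussianReal_map_mul_const c, mul_zero]
  rfl

lemma map_neg_gaussian {X : Ω → ℝ} {v : ℝ≥0} (hX : Measurable X)
    (hlaw : Measure.map X ℙ = gaussianReal 0 v) :
    Measure.map (fun ω => -X ω) ℙ = Measure.map X ℙ := by
  have h := map_mul_const_gaussian hX hlaw (-1)
  have e1 : (fun ω => X ω * (-1)) = fun ω => -X ω := by funext ω; ring
  rw [e1] at h
  rw [h, hlaw]
  congr 1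
  apply NNReal.coe_injective
  simp [NNReal.coe_mul]
  exact one_mul v

lemma memℒp_two_gaussian {X : Ω → ℝ} {v : ℝ≥0} (hX : Measurable X)
    (hlaw : Measure.map X ℙ = gaussianReal 0 v) :
    MemLp X 2 ℙ := by
  have h0 : MemLp (id : ℝ → ℝ) 2 (Measure.map X ℙ) := by
    rw [hlaw, memLp_two_iff_integrable_sq aestronglyMeasurable_id]
    exact integrable_sq_gaussianReal v
  exact (memLp_map_measure_iff aestronglyMeasurable_id hX.aemeasurable).mp h0

lemma integral_sq_gaussian_rv {X : Ω → ℝ} {v : ℝ≥0} (hX : Measurable X)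
    (hlaw : Measure.map X ℙ = gaussianReal 0 v) :
    ∫ ω, X ω ^ 2 ∂ℙ = v := by
  rw [← integral_map hX.aemeasurable
    (continuous_pow 2 : Continuous fun y : ℝ => y ^ 2).aestronglyMeasurable, hlaw,
    integral_sq_gaussianReal]

lemma integral_eq_zero_of_map_neg_eq {X : Ω → ℝ} (hX : Measurable X)
    (h : Measure.map (fun ω => -X ω) ℙ = Measure.map X ℙ) :
    ∫ ω, X ω ∂ℙ = 0 := by
  have h1 : ∫ ω, X ω ∂ℙ = ∫ y, y ∂(Measure.map X ℙ) :=
    (integral_map hX.aemeasurable aestronglyMeasurable_id).symm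
  have h2 : ∫ ω, -X ω ∂ℙ = ∫ y, y ∂(Measure.map X ℙ) := by
    rw [← h]
    exact (integral_map hX.neg.aemeasurable aestronglyMeasurable_id).symm
  have h3 : ∫ ω, -X ω ∂ℙ = -∫ ω, X ω ∂ℙ := by rw [integral_neg]
  linarith [h1, h2, h3]

lemma variance_gaussian_rv {X : Ω → ℝ} {v : ℝ≥0} (hX : Measurable X)
    (hlaw : Measure.map X ℙ = gaussianReal 0 v) :
    variance X ℙ = v := by
  rw [variance_eq_sub (memℒp_two_gaussian hX hlaw)]
  have e1 : (ℙ : Measure Ω)[X ^ 2] = ∫ ω, X ω ^ 2 ∂ℙ := by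
    congr 1
  have e2 : (ℙ : Measure Ω)[X] = 0 :=
    integral_eq_zero_of_map_neg_eq hX (map_neg_gaussian hX hlaw)
  rw [e1, e2, integral_sq_gaussian_rv hX hlaw]
  ring

lemma map_neg_add_of_indep {X Y : Ω → ℝ} (hX : Measurable X) (hY : Measurable Y)
    (hind : IndepFun X Y ℙ)
    (hsX : Measure.map (fun ω => -X ω) ℙ = Measure.map X ℙ)
    (hsY : Measure.map (fun ω => -Y ω) ℙ = Measure.map Y ℙ) :
    Measure.map (fun ω => -(X ω + Y ω)) ℙ = Measure.map (fun ω => X ω + Y ω) ℙ := by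
  have hXn : Measurable fun ω => -X ω := hX.neg
  have hYn : Measurable fun ω => -Y ω := hY.neg
  have hindn : IndepFun (fun ω => -X ω) (fun ω => -Y ω) ℙ :=
    hind.comp measurable_neg measurable_neg
  have e1 : Measure.map (fun ω => (X ω, Y ω)) ℙ = (Measure.map X ℙ).prod (Measure.map Y ℙ) :=
    (indepFun_iff_map_prod_eq_prod_map_map hX.aemeasurable hY.aemeasurable).mp hind
  have e2 : Measure.map (fun ω => (-X ω, -Y ω)) ℙ
      = (Measure.map X ℙ).prod (Measure.map Y ℙ) := by
    rw [(indepFun_iff_map_prod_eq_prod_map_map hXn.aemeasurable hYn.aemeasurable).mp hindn,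
      hsX, hsY]
  have c1 : (fun ω => X ω + Y ω)
      = (fun p : ℝ × ℝ => p.1 + p.2) ∘ (fun ω => (X ω, Y ω)) := rfl
  have c2 : (fun ω => -(X ω + Y ω))
      = (fun p : ℝ × ℝ => p.1 + p.2) ∘ (fun ω => (-X ω, -Y ω)) := by
    funext ω
    simp only [Function.comp_apply]
    ring
  rw [c1, c2, ← Measure.map_map measurable_add (hXn.prodMk hYn),
    ← Measure.map_map measurable_add (hX.prodMk hY), e1, e2]

lemma map_neg_sum_of_iIndep {κ : Type*} {f : κ → Ω → ℝ}
    (hmeas : ∀ k, Measurable (f k))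
    (hindep : iIndepFun f ℙ)
    (hsymm : ∀ k, Measure.map (fun ω => -f k ω) ℙ = Measure.map (f k) ℙ)
    (s : Finset κ) :
    Measure.map (fun ω => -(∑ k ∈ s, f k ω)) ℙ
      = Measure.map (fun ω => ∑ k ∈ s, f k ω) ℙ := by
  classical
  induction s using Finset.induction_on with
  | empty => simp
  | @insert a s ha ih =>
    have hsum_meas : Measurable fun ω => ∑ k ∈ s, f k ω :=
      Finset.measurable_sum s fun k _ => hmeas k
    have hind : IndepFun (f a) (fun ω => ∑ k ∈ s, f k ω) ℙ := by
      have h := (hindep.indepFun_finset_sum_of_notMem hmeas ha).symm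
      have : (∑ j ∈ s, f j) = fun ω => ∑ k ∈ s, f k ω := by
        funext ω
        simp [Finset.sum_apply]
      rwa [this] at h
    simp_rw [Finset.sum_insert ha]
    exact map_neg_add_of_indep (hmeas a) hsum_meas hind (hsymm a) ih

end Prob

/-- The expected squared norm of the output of one ReLU layer with fixed input
`x`, i.i.d. Gaussian weights `w i j ~ N(0, σw²)` and biases `b i ~ N(0, σb²)`,
all jointly independent, equals `(σw² ‖x‖² + σb²) · N/2`. -/
theorem relu_layer_expected_squared_norm
    {Ω : Type*} [MeasureSpace Ω] [IsProbabilityMeasure (ℙ : Measure Ω)]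
    (n N : ℕ) (x : Fin n → ℝ) (σw σb : ℝ≥0)
    (w : Fin N → Fin n → Ω → ℝ) (b : Fin N → Ω → ℝ)
    (hw_meas : ∀ i j, Measurable (w i j)) (hb_meas : ∀ i, Measurable (b i))
    (hw_law : ∀ i j, Measure.map (w i j) ℙ = gaussianReal 0 (σw ^ 2))
    (hb_law : ∀ i, Measure.map (b i) ℙ = gaussianReal 0 (σb ^ 2))
    (hindep : iIndepFun
      (Sum.elim (fun p : Fin N × Fin n => w p.1 p.2) b) ℙ) :
    ∫ ω, ∑ i, max (∑ j, w i j ω * x j + b i ω) 0 ^ 2 ∂ℙ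
      = ((σw : ℝ) ^ 2 * ∑ j, x j ^ 2 + (σb : ℝ) ^ 2) * N / 2 := by
  classical
  set c : ℝ := (σw : ℝ) ^ 2 * ∑ j, x j ^ 2 + (σb : ℝ) ^ 2 with hc
  let φ : (Fin N × Fin n) ⊕ (Fin N) → ℝ → ℝ :=
    Sum.elim (fun p t => t * x p.2) (fun _ t => t)
  let f : (Fin N × Fin n) ⊕ (Fin N) → Ω → ℝ :=
    Sum.elim (fun p ω => w p.1 p.2 ω * x p.2) b
  have hφ_meas : ∀ k, Measurable (φ k) := by
    rintro (p | i)
    · exact measurable_id.mul_const _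
    · exact measurable_id
  have hf_meas : ∀ k, Measurable (f k) := by
    rintro (p | i)
    · exact (hw_meas p.1 p.2).mul_const _
    · exact hb_meas i
  have hf_eq : f = fun k => φ k ∘ (Sum.elim (fun p : Fin N × Fin n => w p.1 p.2) b) k := by
    funext k; cases k <;> rfl
  have hindep' : iIndepFun f ℙ := by
    rw [hf_eq]; exact hindep.comp φ hφ_meas
  let vv : (Fin N × Fin n) ⊕ (Fin N) → ℝ≥0 :=
    Sum.elim (fun p => (⟨x p.2 ^ 2, sq_nonneg _⟩ * σw ^ 2 : ℝ≥0)) (fun _ => σb ^ 2)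
  have hlaw' : ∀ k, Measure.map (f k) ℙ = gaussianReal 0 (vv k) := by
    rintro (p | i)
    · exact map_mul_const_gaussian (hw_meas p.1 p.2) (hw_law p.1 p.2) (x p.2)
    · exact hb_law i
  have hsymm : ∀ k, Measure.map (fun ω => -f k ω) ℙ = Measure.map (f k) ℙ :=
    fun k => map_neg_gaussian (hf_meas k) (hlaw' k)
  have hmem : ∀ k, MemLp (f k) 2 ℙ := fun k => memℒp_two_gaussian (hf_meas k) (hlaw' k)
  have hvar : ∀ k, variance (f k) ℙ = vv k :=
    fun k => variance_gaussian_rv (hf_meas k) (hlaw' k)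
  have key : ∀ i : Fin N,
      Integrable (fun ω => max (∑ j, w i j ω * x j + b i ω) 0 ^ 2) ℙ ∧
      ∫ ω, max (∑ j, w i j ω * x j + b i ω) 0 ^ 2 ∂ℙ = c / 2 := by
    intro i
    set s : Finset ((Fin N × Fin n) ⊕ (Fin N)) :=
      (Finset.univ.image fun j : Fin n => Sum.inl (i, j)) ∪ {Sum.inr i} with hs
    have hdisj : Disjoint (Finset.univ.image fun j : Fin n => Sum.inl (i, j))
        ({Sum.inr i} : Finset ((Fin N × Fin n) ⊕ (Fin N))) := by
      simp [Finset.disjoint_singleton_right]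
    have hinj : ∀ a ∈ (Finset.univ : Finset (Fin n)), ∀ b' ∈ (Finset.univ : Finset (Fin n)),
        (Sum.inl (i, a) : (Fin N × Fin n) ⊕ (Fin N)) = Sum.inl (i, b') → a = b' := by
      intro a _ b' _ hab
      simpa using hab
    have hZeq : ∀ ω, (∑ j, w i j ω * x j + b i ω) = ∑ k ∈ s, f k ω := by
      intro ω
      rw [hs, Finset.sum_union hdisj, Finset.sum_image hinj, Finset.sum_singleton]
      rfl
    set Z : Ω → ℝ := fun ω => ∑ k ∈ s, f k ω with hZ
    have hZmeas : Measurable Z := Finset.measurable_sum s fun k _ => hf_meas k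
    have hZfun : (∑ k ∈ s, f k) = Z := by
      funext ω; simp [hZ, Finset.sum_apply]
    have hZmem : MemLp Z 2 ℙ := by
      rw [← hZfun]; exact memLp_finset_sum' s fun k _ => hmem k
    have hZsq_int : Integrable (fun ω => Z ω ^ 2) ℙ :=
      (memLp_two_iff_integrable_sq hZmem.aestronglyMeasurable).mp hZmem
    have hZsymm : Measure.map (fun ω => -Z ω) ℙ = Measure.map Z ℙ :=
      map_neg_sum_of_iIndep hf_meas hindep' hsymm s
    have hbound : ∀ ω, max (Z ω) 0 ^ 2 ≤ Z ω ^ 2 := by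
      intro ω
      rcases le_total 0 (Z ω) with h | h
      · rw [max_eq_left h]
      · rw [max_eq_right h]
        simpa using sq_nonneg (Z ω)
    have hboundneg : ∀ ω, max (-Z ω) 0 ^ 2 ≤ Z ω ^ 2 := by
      intro ω
      rcases le_total 0 (Z ω) with h | h
      · rw [max_eq_right (neg_nonpos.mpr h)]
        simpa using sq_nonneg (Z ω)
      · rw [max_eq_left (neg_nonneg.mpr h), neg_pow]
        norm_num
    have hmax_meas : Measurable fun ω => max (Z ω) 0 ^ 2 :=
      (hZmeas.max measurable_const).pow_const 2
    have hmaxneg_meas : Measurable fun ω => max (-Z ω) 0 ^ 2 :=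
      (hZmeas.neg.max measurable_const).pow_const 2
    have hmax_int : Integrable (fun ω => max (Z ω) 0 ^ 2) ℙ :=
      hZsq_int.mono' hmax_meas.aestronglyMeasurable
        (Filter.Eventually.of_forall fun ω => by
          rw [Real.norm_eq_abs, abs_of_nonneg (by positivity)]
          exact hbound ω)
    have hmaxneg_int : Integrable (fun ω => max (-Z ω) 0 ^ 2) ℙ :=
      hZsq_int.mono' hmaxneg_meas.aestronglyMeasurable
        (Filter.Eventually.of_forall fun ω => by
          rw [Real.norm_eq_abs, abs_of_nonneg (by positivity)]
          exact hboundneg ω)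
    have hgcont : Continuous fun t : ℝ => max t 0 ^ 2 :=
      (continuous_id.max continuous_const).pow 2
    have heq : ∫ ω, max (Z ω) 0 ^ 2 ∂ℙ = ∫ ω, max (-Z ω) 0 ^ 2 ∂ℙ := by
      have i1 : ∫ ω, max (Z ω) 0 ^ 2 ∂ℙ = ∫ t, max t 0 ^ 2 ∂(Measure.map Z ℙ) :=
        (integral_map hZmeas.aemeasurable hgcont.aestronglyMeasurable).symm
      have i2 : ∫ ω, max (-Z ω) 0 ^ 2 ∂ℙ = ∫ t, max t 0 ^ 2 ∂(Measure.map Z ℙ) := by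
        rw [← hZsymm]
        exact (integral_map hZmeas.neg.aemeasurable hgcont.aestronglyMeasurable).symm
      exact i1.trans i2.symm
    have hptwise : ∀ ω, max (Z ω) 0 ^ 2 + max (-Z ω) 0 ^ 2 = Z ω ^ 2 := by
      intro ω
      rcases le_total 0 (Z ω) with h | h
      · rw [max_eq_left h, max_eq_right (neg_nonpos.mpr h)]
        ring
      · rw [max_eq_right h, max_eq_left (neg_nonneg.mpr h)]
        ring
    have hdouble : 2 * ∫ ω, max (Z ω) 0 ^ 2 ∂ℙ = ∫ ω, Z ω ^ 2 ∂ℙ := by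
      have e : ∫ ω, Z ω ^ 2 ∂ℙ = ∫ ω, (max (Z ω) 0 ^ 2 + max (-Z ω) 0 ^ 2) ∂ℙ := by
        congr 1
        funext ω
        rw [hptwise ω]
      rw [e, integral_add hmax_int hmaxneg_int, ← heq]
      ring
    have hpair : (↑s : Set ((Fin N × Fin n) ⊕ (Fin N))).Pairwise
        fun k l => IndepFun (f k) (f l) ℙ :=
      fun k _ l _ hkl => hindep'.indepFun hkl
    have hvarZ : variance Z ℙ = ∑ k ∈ s, (vv k : ℝ) := by
      rw [← hZfun, IndepFun.variance_sum (fun k _ => hmem k) hpair]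
      exact Finset.sum_congr rfl fun k _ => hvar k
    have hEZ : ∫ ω, Z ω ∂ℙ = 0 := integral_eq_zero_of_map_neg_eq hZmeas hZsymm
    have hv : variance Z ℙ = (∫ ω, Z ω ^ 2 ∂ℙ) - (∫ ω, Z ω ∂ℙ) ^ 2 := variance_eq_sub hZmem
    have hEZsq : ∫ ω, Z ω ^ 2 ∂ℙ = ∑ k ∈ s, (vv k : ℝ) := by
      rw [hEZ] at hv
      linarith [hvarZ, hv]
    have hsumvv : ∑ k ∈ s, (vv k : ℝ) = c := by
      rw [hs, Finset.sum_union hdisj, Finset.sum_image hinj, Finset.sum_singleton]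
      have e1 : ∀ j : Fin n, ((vv (Sum.inl (i, j)) : ℝ≥0) : ℝ) = x j ^ 2 * (σw : ℝ) ^ 2 := by
        intro j
        simp [vv, NNReal.coe_mul]
        exact (NNReal.coe_mul (⟨x j ^ 2, sq_nonneg _⟩ : ℝ≥0) (σw ^ 2)).trans
          (congrArg (x j ^ 2 * ·) (NNReal.coe_pow σw 2))
      have e2 : ((vv (Sum.inr i) : ℝ≥0) : ℝ) = (σb : ℝ) ^ 2 := by
        simp [vv]
      rw [Finset.sum_congr rfl fun j _ => e1 j, e2, hc]
      rw [Finset.sum_congr rfl fun j (_ : j ∈ Finset.univ) => mul_comm (x j ^ 2) ((σw : ℝ) ^ 2),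
        ← Finset.mul_sum]
    have hrw : (fun ω => max (∑ j, w i j ω * x j + b i ω) 0 ^ 2)
        = fun ω => max (Z ω) 0 ^ 2 := by
      funext ω
      rw [hZeq ω]
    constructor
    · rw [hrw]; exact hmax_int
    · calc ∫ ω, max (∑ j, w i j ω * x j + b i ω) 0 ^ 2 ∂ℙ
          = ∫ ω, max (Z ω) 0 ^ 2 ∂ℙ := by rw [hrw]
        _ = c / 2 := by
            rw [hsumvv] at hEZsq
            linarith [hdouble, hEZsq]
  rw [integral_finset_sum Finset.univ fun i _ => (key i).1,
    Finset.sum_congr rfl fun i (_ : i ∈ Finset.univ) => (key i).2]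
  simp only [Finset.sum_const, Finset.card_univ, Fintype.card_fin, nsmul_eq_mul]
  rw [hc]
  ring
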